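/- Let (Ω, ℱ, ℙ) be a probability space, k a positive integer, ε ≥ 0, and θ_0, θ_1, …, θ_k : Ω → ℝⁿ square-integrable random vectors satisfying 𝔼[‖θ_{i+1} − G(θ_i)‖₂²] ≤ ε for all i = 0, 1, …, k−1, where G(θ) := (ΦᵀDΦ)⁻¹ΦᵀD(R + γPΦθ). Then for every i with 0 ≤ i ≤ k, 𝔼[‖θ_i − θ*‖₂²] ≤ ω₁ε + ω₂, where ω₁ := 2(1+γ²)λ_max(ΦᵀDΦ) / ((1−γ²)² λ_min(ΦᵀDΦ)), ω₂ := 𝔼[‖Φθ_0 − Φθ*‖_D²] / λ_min(ΦᵀDΦ), and θ* := −(ΦᵀD(γP − I)Φ)⁻¹ΦᵀDR. -/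

import Mathlib

open Matrix BigOperators MeasureTheory

namespace PTDaux

variable {N n : ℕ}

lemma sq_diag_eq (d : Fin N → ℝ) (v : Fin N → ℝ) :
    v ⬝ᵥ (Matrix.diagonal d).mulVec v = ∑ s, d s * v s ^ 2 := by
  simp only [dotProduct, Matrix.mulVec_diagonal]
  exact Finset.sum_congr rfl fun s _ => by ring

lemma ip_diag_eq (d : Fin N → ℝ) (a b : Fin N → ℝ) :
    a ⬝ᵥ (Matrix.diagonal d).mulVec b = ∑ s, d s * (a s * b s) := by
  simp only [dotProduct, Matrix.mulVec_diagonal]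
  exact Finset.sum_congr rfl fun s _ => by ring

lemma P_contract (P : Matrix (Fin N) (Fin N) ℝ) (d : Fin N → ℝ)
    (hP0 : ∀ i j, 0 ≤ P i j) (hProw : ∀ i, ∑ j, P i j = 1)
    (hd0 : ∀ s, 0 ≤ d s) (hstat : Matrix.vecMul d P = d) (z : Fin N → ℝ) :
    (P.mulVec z) ⬝ᵥ (Matrix.diagonal d).mulVec (P.mulVec z) ≤
      z ⬝ᵥ (Matrix.diagonal d).mulVec z := by
  rw [sq_diag_eq, sq_diag_eq]
  have key : ∀ s, (P.mulVec z) s ^ 2 ≤ ∑ t, P s t * z t ^ 2 := by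
    intro s
    have h := Finset.sum_mul_sq_le_sq_mul_sq Finset.univ
      (fun t => Real.sqrt (P s t)) (fun t => Real.sqrt (P s t) * z t)
    have e1 : ∀ t, Real.sqrt (P s t) * (Real.sqrt (P s t) * z t) = P s t * z t := by
      intro t; rw [← mul_assoc, Real.mul_self_sqrt (hP0 s t)]
    have e2 : ∀ t, Real.sqrt (P s t) ^ 2 = P s t := fun t => Real.sq_sqrt (hP0 s t)
    have e3 : ∀ t, (Real.sqrt (P s t) * z t) ^ 2 = P s t * z t ^ 2 := by
      intro t; rw [mul_pow, e2]
    simp only [e1, e3] at h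
    calc (P.mulVec z) s ^ 2 = (∑ t, P s t * z t) ^ 2 := by
          simp [Matrix.mulVec, dotProduct]
      _ ≤ (∑ t, Real.sqrt (P s t) ^ 2) * ∑ t, P s t * z t ^ 2 := h
      _ = ∑ t, P s t * z t ^ 2 := by
          simp only [e2]; rw [hProw s, one_mul]
  calc ∑ s, d s * (P.mulVec z) s ^ 2
      ≤ ∑ s, d s * ∑ t, P s t * z t ^ 2 :=
        Finset.sum_le_sum fun s _ => mul_le_mul_of_nonneg_left (key s) (hd0 s)
    _ = ∑ s, ∑ t, d s * P s t * z t ^ 2 := by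
        refine Finset.sum_congr rfl fun s _ => ?_
        rw [Finset.mul_sum]; exact Finset.sum_congr rfl fun t _ => by ring
    _ = ∑ t, (∑ s, d s * P s t) * z t ^ 2 := by
        rw [Finset.sum_comm]
        exact Finset.sum_congr rfl fun t _ => by rw [Finset.sum_mul]
    _ = ∑ t, d t * z t ^ 2 := by
        refine Finset.sum_congr rfl fun t _ => ?_
        have := congrFun hstat t
        simp only [Matrix.vecMul, dotProduct] at this
        rw [this]

lemma phi_inj (Φ : Matrix (Fin N) (Fin n) ℝ) (hΦ : Φ.rank = n)
    (v : Fin n → ℝ) (hv : Φ.mulVec v = 0) : v = 0 := by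
  have hker : LinearMap.ker Φ.mulVecLin = ⊥ := by
    have h := Φ.mulVecLin.finrank_range_add_finrank_ker
    rw [show Module.finrank ℝ (Fin n → ℝ) = n by simp] at h
    rw [Matrix.rank] at hΦ
    have : Module.finrank ℝ (LinearMap.ker Φ.mulVecLin) = 0 := by omega
    exact Submodule.finrank_eq_zero.mp this
  have : v ∈ LinearMap.ker Φ.mulVecLin := hv
  rw [hker] at this; exact this

lemma quad_eq (d : Fin N → ℝ) (Φ : Matrix (Fin N) (Fin n) ℝ) (x : Fin n → ℝ) :
    x ⬝ᵥ (Φᵀ * Matrix.diagonal d * Φ).mulVec x =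
      (Φ.mulVec x) ⬝ᵥ (Matrix.diagonal d).mulVec (Φ.mulVec x) := by
  rw [← Matrix.mulVec_mulVec, ← Matrix.mulVec_mulVec, Matrix.dotProduct_mulVec x,
    Matrix.vecMul_transpose, Matrix.mulVec_mulVec]

lemma posdef_M (d : Fin N → ℝ) (hdpos : ∀ s, 0 < d s)
    (Φ : Matrix (Fin N) (Fin n) ℝ) (hΦ : Φ.rank = n)
    (hHerm : (Φᵀ * Matrix.diagonal d * Φ).IsHermitian) :
    (Φᵀ * Matrix.diagonal d * Φ).PosDef := by
  refine Matrix.PosDef.of_dotProduct_mulVec_pos hHerm fun x hx => ?_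
  have hΦx : Φ.mulVec x ≠ 0 := fun h => hx (phi_inj Φ hΦ x h)
  have : (0:ℝ) < x ⬝ᵥ (Φᵀ * Matrix.diagonal d * Φ).mulVec x := by
    rw [quad_eq, sq_diag_eq]
    obtain ⟨s, hs⟩ := Function.ne_iff.mp hΦx
    refine Finset.sum_pos' (fun t _ => mul_nonneg (hdpos t).le (sq_nonneg _))
      ⟨s, Finset.mem_univ s, ?_⟩
    exact mul_pos (hdpos s) (pow_pos (abs_pos.mpr hs) 2 |>.trans_eq (sq_abs _))
  simpa using this

lemma quad_bounds (M : Matrix (Fin n) (Fin n) ℝ) (hH : M.IsHermitian) (x : Fin n → ℝ) :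
    (⨅ i, hH.eigenvalues i) * (∑ j, x j ^ 2) ≤ x ⬝ᵥ M.mulVec x ∧
    x ⬝ᵥ M.mulVec x ≤ (⨆ i, hH.eigenvalues i) * (∑ j, x j ^ 2) := by
  classical
  set U : Matrix (Fin n) (Fin n) ℝ := (hH.eigenvectorUnitary : Matrix (Fin n) (Fin n) ℝ)
  have hU : U * star U = 1 := (Matrix.mem_unitaryGroup_iff).mp hH.eigenvectorUnitary.2
  set y : Fin n → ℝ := (star U).mulVec x with hy
  have hspec := hH.spectral_theorem
  have hofReal : (RCLike.ofReal ∘ hH.eigenvalues : Fin n → ℝ) = hH.eigenvalues := by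
    ext i; simp
  have hquad : x ⬝ᵥ M.mulVec x = ∑ i, hH.eigenvalues i * y i ^ 2 := by
    conv_lhs => rw [hspec]
    rw [hofReal, Unitary.conjStarAlgAut_apply, ← Matrix.mulVec_mulVec, ← Matrix.mulVec_mulVec,
      Matrix.dotProduct_mulVec x U]
    have hstarU : star U = Uᵀ := by
      ext i j; simp [Matrix.star_apply]
    have : Matrix.vecMul x U = y := by
      rw [hy, hstarU, Matrix.mulVec_transpose]
    rw [this, hy.symm]
    rw [show (Matrix.diagonal hH.eigenvalues).mulVec y = fun i => hH.eigenvalues i * y i by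
      ext i; rw [Matrix.mulVec_diagonal]]
    simp only [dotProduct]
    exact Finset.sum_congr rfl fun i _ => by ring
  have hnorm : ∑ i, y i ^ 2 = ∑ j, x j ^ 2 := by
    have hstarU : star U = Uᵀ := by
      ext i j; simp [Matrix.star_apply]
    have : y ⬝ᵥ y = x ⬝ᵥ x := by
      conv_lhs => rw [Matrix.dotProduct_mulVec]
      have hvy : Matrix.vecMul y (star U) = x := by
        rw [hstarU, Matrix.vecMul_transpose, hy, hstarU, Matrix.mulVec_mulVec,
          ← hstarU, hU, Matrix.one_mulVec]
      rw [hvy]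
    simpa [dotProduct, sq] using this
  constructor
  · rw [hquad, ← hnorm, Finset.mul_sum]
    refine Finset.sum_le_sum fun i _ => ?_
    have hb : BddBelow (Set.range hH.eigenvalues) := Set.Finite.bddBelow (Set.finite_range _)
    exact mul_le_mul_of_nonneg_right (ciInf_le hb i) (sq_nonneg _)
  · rw [hquad, ← hnorm, Finset.mul_sum]
    refine Finset.sum_le_sum fun i _ => ?_
    have hb : BddAbove (Set.range hH.eigenvalues) := Set.Finite.bddAbove (Set.finite_range _)
    exact mul_le_mul_of_nonneg_right (le_ciSup hb i) (sq_nonneg _)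

lemma sqd_nonneg (d : Fin N → ℝ) (hd : ∀ s, 0 ≤ d s) (v : Fin N → ℝ) :
    0 ≤ ∑ s, d s * v s ^ 2 :=
  Finset.sum_nonneg fun s _ => mul_nonneg (hd s) (sq_nonneg _)

lemma sqd_add (d a b : Fin N → ℝ) :
    ∑ s, d s * (a s + b s) ^ 2 =
      (∑ s, d s * a s ^ 2) + 2 * (∑ s, d s * (a s * b s)) + ∑ s, d s * b s ^ 2 := by
  rw [Finset.mul_sum, ← Finset.sum_add_distrib, ← Finset.sum_add_distrib]
  exact Finset.sum_congr rfl fun s _ => by ring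

lemma ip_le (d a b : Fin N → ℝ) (hd : ∀ s, 0 ≤ d s)
    (hb : ∑ s, d s * b s ^ 2 ≤ ∑ s, d s * a s ^ 2) :
    ∑ s, d s * (a s * b s) ≤ ∑ s, d s * a s ^ 2 := by
  have ha0 : 0 ≤ ∑ s, d s * a s ^ 2 := sqd_nonneg d hd a
  have hcs := Finset.sum_mul_sq_le_sq_mul_sq Finset.univ
    (fun s => Real.sqrt (d s) * a s) (fun s => Real.sqrt (d s) * b s)
  have e1 : ∀ s, (Real.sqrt (d s) * a s) * (Real.sqrt (d s) * b s) = d s * (a s * b s) := by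
    intro s
    have : Real.sqrt (d s) * Real.sqrt (d s) = d s := Real.mul_self_sqrt (hd s)
    calc (Real.sqrt (d s) * a s) * (Real.sqrt (d s) * b s)
        = (Real.sqrt (d s) * Real.sqrt (d s)) * (a s * b s) := by ring
      _ = d s * (a s * b s) := by rw [this]
  have e2 : ∀ (c : Fin N → ℝ) s, (Real.sqrt (d s) * c s) ^ 2 = d s * c s ^ 2 := by
    intro c s; rw [mul_pow, Real.sq_sqrt (hd s)]
  simp only [e1, e2] at hcs
  calc ∑ s, d s * (a s * b s) ≤ |∑ s, d s * (a s * b s)| := le_abs_self _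
    _ = Real.sqrt ((∑ s, d s * (a s * b s)) ^ 2) := (Real.sqrt_sq_eq_abs _).symm
    _ ≤ Real.sqrt ((∑ s, d s * a s ^ 2) * ∑ s, d s * b s ^ 2) := Real.sqrt_le_sqrt hcs
    _ ≤ Real.sqrt ((∑ s, d s * a s ^ 2) * ∑ s, d s * a s ^ 2) :=
        Real.sqrt_le_sqrt (mul_le_mul_of_nonneg_left hb ha0)
    _ = ∑ s, d s * a s ^ 2 := Real.sqrt_mul_self ha0

lemma dot_phi (Φ : Matrix (Fin N) (Fin n) ℝ) (u : Fin n → ℝ) (x : Fin N → ℝ) :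
    (Φ.mulVec u) ⬝ᵥ x = u ⬝ᵥ (Φᵀ.mulVec x) := by
  rw [dotProduct_comm, Matrix.dotProduct_mulVec, dotProduct_comm, Matrix.mulVec_transpose]

section main
variable (P : Matrix (Fin N) (Fin N) ℝ) (d : Fin N → ℝ) (γ : ℝ)
  (Φ : Matrix (Fin N) (Fin n) ℝ) (R : Fin N → ℝ)

include P d γ Φ in
lemma A_quad_neg (hPnonneg : ∀ i j, 0 ≤ P i j) (hProw : ∀ i, ∑ j, P i j = 1)
    (hdpos : ∀ s, 0 < d s) (hstat : Matrix.vecMul d P = d)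
    (hγ0 : 0 < γ) (hγ1 : γ < 1) (hΦ : Φ.rank = n)
    (v : Fin n → ℝ) (hv : v ≠ 0) :
    v ⬝ᵥ (Φᵀ * Matrix.diagonal d * (γ • P - 1) * Φ).mulVec v < 0 := by
  set D := Matrix.diagonal d
  set z : Fin N → ℝ := P.mulVec (Φ.mulVec v) with hz
  have hmv : (Φᵀ * D * (γ • P - 1) * Φ).mulVec v
      = Φᵀ.mulVec (D.mulVec ((γ • P - 1).mulVec (Φ.mulVec v))) := by
    rw [← Matrix.mulVec_mulVec, ← Matrix.mulVec_mulVec, ← Matrix.mulVec_mulVec]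
  have hw : (γ • P - 1).mulVec (Φ.mulVec v) = γ • z - Φ.mulVec v := by
    rw [Matrix.sub_mulVec, Matrix.smul_mulVec, Matrix.one_mulVec, hz]
  have hval : v ⬝ᵥ (Φᵀ * D * (γ • P - 1) * Φ).mulVec v
      = γ * (∑ s, d s * (Φ.mulVec v s * z s)) - ∑ s, d s * (Φ.mulVec v) s ^ 2 := by
    rw [hmv, ← dot_phi, hw]
    rw [show (D.mulVec (γ • z - Φ.mulVec v)) = γ • D.mulVec z - D.mulVec (Φ.mulVec v) by
      rw [Matrix.mulVec_sub, Matrix.mulVec_smul]]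
    rw [dotProduct_sub, dotProduct_smul, ip_diag_eq, sq_diag_eq]
    simp [smul_eq_mul]
  have hcontr : ∑ s, d s * z s ^ 2 ≤ ∑ s, d s * (Φ.mulVec v) s ^ 2 := by
    have := P_contract P d hPnonneg hProw (fun s => (hdpos s).le) hstat (Φ.mulVec v)
    rwa [sq_diag_eq, sq_diag_eq] at this
  have hip := ip_le d (Φ.mulVec v) z (fun s => (hdpos s).le) hcontr
  have hpos : 0 < ∑ s, d s * (Φ.mulVec v) s ^ 2 := by
    have hΦv : Φ.mulVec v ≠ 0 := fun h => hv (phi_inj Φ hΦ v h)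
    obtain ⟨s, hs⟩ := Function.ne_iff.mp hΦv
    refine Finset.sum_pos' (fun t _ => mul_nonneg (hdpos t).le (sq_nonneg _))
      ⟨s, Finset.mem_univ s, mul_pos (hdpos s) (pow_pos (abs_pos.mpr hs) 2 |>.trans_eq (sq_abs _))⟩
  rw [hval]
  have h1 : γ * (∑ s, d s * (Φ.mulVec v s * z s)) ≤ γ * ∑ s, d s * (Φ.mulVec v) s ^ 2 :=
    mul_le_mul_of_nonneg_left hip hγ0.le
  nlinarith

include P d γ Φ in
lemma A_det_unit (hPnonneg : ∀ i j, 0 ≤ P i j) (hProw : ∀ i, ∑ j, P i j = 1)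
    (hdpos : ∀ s, 0 < d s) (hstat : Matrix.vecMul d P = d)
    (hγ0 : 0 < γ) (hγ1 : γ < 1) (hΦ : Φ.rank = n) :
    IsUnit (Φᵀ * Matrix.diagonal d * (γ • P - 1) * Φ).det := by
  set A := Φᵀ * Matrix.diagonal d * (γ • P - 1) * Φ with hA
  rw [← Matrix.isUnit_iff_isUnit_det]
  rw [← Matrix.mulVec_injective_iff_isUnit]
  have hker : ∀ v, A.mulVec v = 0 → v = 0 := by
    intro v hv
    by_contra hv0
    have := A_quad_neg P d γ Φ hPnonneg hProw hdpos hstat hγ0 hγ1 hΦ v hv0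
    rw [hv] at this
    simp at this
  intro v w hvw
  have : A.mulVec (v - w) = 0 := by
    rw [Matrix.mulVec_sub, hvw, sub_self]
  exact sub_eq_zero.mp (hker _ this)

/-- The exact P-TD subproblem solution map. -/
noncomputable def G (v : Fin n → ℝ) : Fin n → ℝ :=
  (Φᵀ * Matrix.diagonal d * Φ)⁻¹.mulVec
    ((Φᵀ * Matrix.diagonal d).mulVec (R + γ • P.mulVec (Φ.mulVec v)))

/-- The projected Bellman fixed point. -/
noncomputable def θs : Fin n → ℝ :=
  -((Φᵀ * Matrix.diagonal d * (γ • P - 1) * Φ)⁻¹.mulVec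
      ((Φᵀ * Matrix.diagonal d).mulVec R))

lemma A_split :
    Φᵀ * Matrix.diagonal d * (γ • P - 1) * Φ
      = γ • (Φᵀ * Matrix.diagonal d * P * Φ) - Φᵀ * Matrix.diagonal d * Φ := by
  rw [Matrix.mul_sub, Matrix.sub_mul, Matrix.mul_smul, Matrix.smul_mul, Matrix.mul_one]

lemma fixed_point
    (hMdet : IsUnit (Φᵀ * Matrix.diagonal d * Φ).det)
    (hAdet : IsUnit (Φᵀ * Matrix.diagonal d * (γ • P - 1) * Φ).det) :
    G P d γ Φ R (θs P d γ Φ R) = θs P d γ Φ R := by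
  set D := Matrix.diagonal d
  set M := Φᵀ * D * Φ with hM
  set A := Φᵀ * D * (γ • P - 1) * Φ with hA
  set t := θs P d γ Φ R with ht
  have hAt : A.mulVec t = -((Φᵀ * D).mulVec R) := by
    rw [ht, θs, Matrix.mulVec_neg, Matrix.mulVec_mulVec, Matrix.mul_nonsing_inv _ hAdet,
      Matrix.one_mulVec]
  have hkey : (Φᵀ * D).mulVec (R + γ • P.mulVec (Φ.mulVec t)) = M.mulVec t := by
    rw [Matrix.mulVec_add, Matrix.mulVec_smul, Matrix.mulVec_mulVec, Matrix.mulVec_mulVec]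
    have hsplit := A_split P d γ Φ
    have h2 : γ • ((Φᵀ * D * P * Φ).mulVec t) = A.mulVec t + M.mulVec t := by
      rw [← Matrix.smul_mulVec, hA, hsplit, Matrix.sub_mulVec, ← hM]
      abel
    rw [h2, hAt]
    abel
  rw [G, hkey, Matrix.mulVec_mulVec, Matrix.nonsing_inv_mul _ hMdet, Matrix.one_mulVec]

lemma proj_bound (hd : ∀ s, 0 ≤ d s)
    (hMdet : IsUnit (Φᵀ * Matrix.diagonal d * Φ).det) (z : Fin N → ℝ) :
    ∑ s, d s * (Φ.mulVec ((Φᵀ * Matrix.diagonal d * Φ)⁻¹.mulVec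
        ((Φᵀ * Matrix.diagonal d).mulVec z))) s ^ 2 ≤ ∑ s, d s * z s ^ 2 := by
  set D := Matrix.diagonal d
  set M := Φᵀ * D * Φ with hM
  set u : Fin n → ℝ := M⁻¹.mulVec ((Φᵀ * D).mulVec z) with hu
  have hBu : (Φᵀ * D).mulVec (Φ.mulVec u) = (Φᵀ * D).mulVec z := by
    rw [Matrix.mulVec_mulVec, ← hM, hu, Matrix.mulVec_mulVec,
      Matrix.mul_nonsing_inv _ hMdet, Matrix.one_mulVec]
  have horth : ∑ s, d s * ((Φ.mulVec u) s * (z s - (Φ.mulVec u) s)) = 0 := by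
    have h1 : ∑ s, d s * ((Φ.mulVec u) s * ((z - Φ.mulVec u) s)) = 0 := by
      rw [← ip_diag_eq]
      rw [show (Φ.mulVec u) ⬝ᵥ D.mulVec (z - Φ.mulVec u)
          = u ⬝ᵥ (Φᵀ.mulVec (D.mulVec (z - Φ.mulVec u))) from dot_phi Φ u _]
      rw [Matrix.mulVec_mulVec, Matrix.mulVec_sub, hBu, sub_self, dotProduct_zero]
    simpa only [Pi.sub_apply] using h1
  have hdecomp : ∑ s, d s * z s ^ 2
      = (∑ s, d s * (Φ.mulVec u) s ^ 2) + ∑ s, d s * (z s - (Φ.mulVec u) s) ^ 2 := by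
    have hexp := sqd_add d (Φ.mulVec u) (fun s => z s - (Φ.mulVec u) s)
    calc ∑ s, d s * z s ^ 2
        = ∑ s, d s * ((Φ.mulVec u) s + (z s - (Φ.mulVec u) s)) ^ 2 :=
          Finset.sum_congr rfl fun s _ => by ring_nf
      _ = _ := by rw [hexp, horth]; ring
  rw [hu] at hdecomp
  have hnn := sqd_nonneg d hd (fun s => z s - (Φ.mulVec (M⁻¹.mulVec ((Φᵀ * D).mulVec z))) s)
  linarith

lemma contraction (hd : ∀ s, 0 ≤ d s)
    (hP0 : ∀ i j, 0 ≤ P i j) (hProw : ∀ i, ∑ j, P i j = 1)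
    (hstat : Matrix.vecMul d P = d)
    (hMdet : IsUnit (Φᵀ * Matrix.diagonal d * Φ).det) (v w : Fin n → ℝ) :
    ∑ s, d s * (Φ.mulVec (G P d γ Φ R v) s - Φ.mulVec (G P d γ Φ R w) s) ^ 2
      ≤ γ ^ 2 * ∑ s, d s * (Φ.mulVec v s - Φ.mulVec w s) ^ 2 := by
  set D := Matrix.diagonal d
  set M := Φᵀ * D * Φ with hM
  set z : Fin N → ℝ := P.mulVec (Φ.mulVec v - Φ.mulVec w) with hz
  set u : Fin n → ℝ := M⁻¹.mulVec ((Φᵀ * D).mulVec z) with hu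
  have hGdiff : G P d γ Φ R v - G P d γ Φ R w = γ • u := by
    rw [G, G, ← Matrix.mulVec_sub, ← Matrix.mulVec_sub]
    rw [show (R + γ • P.mulVec (Φ.mulVec v)) - (R + γ • P.mulVec (Φ.mulVec w))
        = γ • z by rw [hz, Matrix.mulVec_sub, smul_sub]; abel]
    rw [Matrix.mulVec_smul, Matrix.mulVec_smul, hu, ← hM]
  have hΦdiff : ∀ s, Φ.mulVec (G P d γ Φ R v) s - Φ.mulVec (G P d γ Φ R w) s
      = γ * Φ.mulVec u s := by
    intro s
    have h1 : Φ.mulVec (G P d γ Φ R v) - Φ.mulVec (G P d γ Φ R w)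
        = Φ.mulVec (γ • u) := by rw [← Matrix.mulVec_sub, hGdiff]
    have := congrFun h1 s
    simpa [Matrix.mulVec_smul] using this
  calc ∑ s, d s * (Φ.mulVec (G P d γ Φ R v) s - Φ.mulVec (G P d γ Φ R w) s) ^ 2
      = γ ^ 2 * ∑ s, d s * (Φ.mulVec u) s ^ 2 := by
        rw [Finset.mul_sum]
        exact Finset.sum_congr rfl fun s _ => by rw [hΦdiff s]; ring
    _ ≤ γ ^ 2 * ∑ s, d s * z s ^ 2 := by
        have hp := proj_bound d Φ hd hMdet z
        rw [← hM, ← hu] at hp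
        exact mul_le_mul_of_nonneg_left hp (sq_nonneg γ)
    _ ≤ γ ^ 2 * ∑ s, d s * (Φ.mulVec v s - Φ.mulVec w s) ^ 2 := by
        have hpc := P_contract P d hP0 hProw hd hstat (Φ.mulVec v - Φ.mulVec w)
        rw [sq_diag_eq, sq_diag_eq, ← hz] at hpc
        simp only [Pi.sub_apply] at hpc
        exact mul_le_mul_of_nonneg_left hpc (sq_nonneg γ)

lemma G_affine (v : Fin n → ℝ) :
    G P d γ Φ R v
      = (Φᵀ * Matrix.diagonal d * Φ)⁻¹.mulVec ((Φᵀ * Matrix.diagonal d).mulVec R)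
        + (γ • ((Φᵀ * Matrix.diagonal d * Φ)⁻¹ * (Φᵀ * Matrix.diagonal d) * P * Φ)).mulVec v := by
  rw [G, Matrix.mulVec_add, Matrix.mulVec_add]
  congr 1
  rw [Matrix.mulVec_smul, Matrix.mulVec_smul, Matrix.mulVec_mulVec, Matrix.mulVec_mulVec,
    Matrix.mulVec_mulVec, Matrix.smul_mulVec]

end main

lemma memL2_mulVec {Ω : Type*} [MeasurableSpace Ω] {μ : MeasureTheory.Measure Ω}
    {l m : ℕ} (K : Matrix (Fin m) (Fin l) ℝ) (x : Ω → Fin l → ℝ)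
    (hx : ∀ t, MeasureTheory.MemLp (fun ω => x ω t) 2 μ) (j : Fin m) :
    MeasureTheory.MemLp (fun ω => (K.mulVec (x ω)) j) 2 μ := by
  have hre : (fun ω => (K.mulVec (x ω)) j) = fun ω => ∑ t, K j t * x ω t := by
    funext ω; simp [Matrix.mulVec, dotProduct]
  rw [hre]
  exact memLp_finset_sum _ fun t _ => (hx t).const_mul _

lemma scalar_weight (β x y : ℝ) (hβ : 0 < β) :
    (x + y) ^ 2 ≤ (1 + 1/β) * x ^ 2 + (1 + β) * y ^ 2 := by
  have key : β * ((x + y) ^ 2) ≤ β * ((1 + 1/β) * x ^ 2 + (1 + β) * y ^ 2) := by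
    have heq : β * ((1 + 1/β) * x ^ 2 + (1 + β) * y ^ 2)
        = (β + 1) * x ^ 2 + (β + β ^ 2) * y ^ 2 := by
      field_simp
    rw [heq]; nlinarith [sq_nonneg (x - β * y)]
  exact le_of_mul_le_mul_left key hβ

lemma sqd_weighted (d : Fin N → ℝ) (hd : ∀ s, 0 ≤ d s) (β : ℝ) (hβ : 0 < β)
    (a b : Fin N → ℝ) :
    ∑ s, d s * (a s + b s) ^ 2
      ≤ (1 + 1/β) * ∑ s, d s * a s ^ 2 + (1 + β) * ∑ s, d s * b s ^ 2 := by
  rw [Finset.mul_sum, Finset.mul_sum, ← Finset.sum_add_distrib]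
  refine Finset.sum_le_sum fun s _ => ?_
  calc d s * (a s + b s) ^ 2
      ≤ d s * ((1 + 1/β) * a s ^ 2 + (1 + β) * b s ^ 2) :=
        mul_le_mul_of_nonneg_left (scalar_weight β (a s) (b s) hβ) (hd s)
    _ = (1 + 1/β) * (d s * a s ^ 2) + (1 + β) * (d s * b s ^ 2) := by ring

end PTDaux

open PTDaux

/-- If the square-integrable random vectors `θ_0, …, θ_k` satisfy
`𝔼[‖θ_{i+1} − G(θ_i)‖₂²] ≤ ε` for `i = 0,…,k−1`, where
`G(θ) := (ΦᵀDΦ)⁻¹ΦᵀD(R + γPΦθ)`, then for every `0 ≤ i ≤ k`,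
`𝔼[‖θ_i − θ*‖₂²] ≤ ω₁ε + ω₂`, where
`ω₁ := 2(1+γ²)λ_max(ΦᵀDΦ)/((1−γ²)² λ_min(ΦᵀDΦ))`,
`ω₂ := 𝔼[‖Φθ_0 − Φθ*‖_D²]/λ_min(ΦᵀDΦ)`, and
`θ* := −(ΦᵀD(γP − I)Φ)⁻¹ΦᵀDR`. -/
theorem periodic_TD_iterates_bounded_second_moment
    (N n : ℕ) (hN : 0 < N) (hn : 0 < n) (hnN : n ≤ N)
    (P : Matrix (Fin N) (Fin N) ℝ) (d : Fin N → ℝ) (γ : ℝ)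
    (Φ : Matrix (Fin N) (Fin n) ℝ) (R : Fin N → ℝ)
    (hPnonneg : ∀ i j, 0 ≤ P i j)
    (hProw : ∀ i, ∑ j, P i j = 1)
    (hdpos : ∀ s, 0 < d s)
    (hdsum : ∑ s, d s = 1)
    (hstat : Matrix.vecMul d P = d)
    (hγ0 : 0 < γ) (hγ1 : γ < 1)
    (hΦ : Φ.rank = n)
    (hHerm : (Φᵀ * Matrix.diagonal d * Φ).IsHermitian)
    {Ω : Type*} [MeasurableSpace Ω] (Pr : Measure Ω) [IsProbabilityMeasure Pr]
    (k : ℕ) (hk : 0 < k)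
    (ε : ℝ) (hε : 0 ≤ ε)
    (θ : ℕ → Ω → Fin n → ℝ)
    (hL2 : ∀ i ≤ k, ∀ j, MemLp (fun ω => θ i ω j) 2 Pr)
    (hrec : ∀ i < k,
      (∫ ω, (∑ j, (θ (i + 1) ω j -
        ((Φᵀ * Matrix.diagonal d * Φ)⁻¹.mulVec
          ((Φᵀ * Matrix.diagonal d).mulVec
            (R + γ • P.mulVec (Φ.mulVec (θ i ω))))) j) ^ 2) ∂Pr) ≤ ε) :
    let D : Matrix (Fin N) (Fin N) ℝ := Matrix.diagonal d
    let sqD : (Fin N → ℝ) → ℝ := fun v => v ⬝ᵥ D.mulVec v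
    let θstar : Fin n → ℝ :=
      -((Φᵀ * D * (γ • P - 1) * Φ)⁻¹.mulVec ((Φᵀ * D).mulVec R))
    let lammax : ℝ := ⨆ i, hHerm.eigenvalues i
    let lammin : ℝ := ⨅ i, hHerm.eigenvalues i
    let ω₁ : ℝ := 2 * (1 + γ ^ 2) * lammax / ((1 - γ ^ 2) ^ 2 * lammin)
    let ω₂ : ℝ := (∫ ω, sqD (Φ.mulVec (θ 0 ω) - Φ.mulVec θstar) ∂Pr) / lammin
    ∀ i ≤ k, (∫ ω, (∑ j, (θ i ω j - θstar j) ^ 2) ∂Pr) ≤ ω₁ * ε + ω₂ := by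
  intro D sqD θstar lammax lammin ω₁ ω₂
  have hd0 : ∀ s, (0:ℝ) ≤ d s := fun s => (hdpos s).le
  have hγ2pos : (0:ℝ) < γ ^ 2 := pow_pos hγ0 2
  have hγ2lt : γ ^ 2 < 1 := by nlinarith
  have h1mγ : (0:ℝ) < 1 - γ ^ 2 := by linarith
  have hPD := posdef_M d hdpos Φ hΦ hHerm
  have hMdet : IsUnit (Φᵀ * Matrix.diagonal d * Φ).det := hPD.det_pos.ne'.isUnit
  have hAdet := A_det_unit P d γ Φ hPnonneg hProw hdpos hstat hγ0 hγ1 hΦ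
  have hfix : G P d γ Φ R (θs P d γ Φ R) = θs P d γ Φ R :=
    fixed_point P d γ Φ R hMdet hAdet
  have hθeq : θstar = θs P d γ Φ R := rfl
  haveI : Nonempty (Fin n) := ⟨⟨0, hn⟩⟩
  -- eigenvalue facts
  have heigpos : ∀ i, 0 < hHerm.eigenvalues i := fun i => hPD.eigenvalues_pos i
  have hlmin_pos : (0:ℝ) < lammin := by
    obtain ⟨i0, hi0⟩ := Finite.exists_min hHerm.eigenvalues
    exact lt_of_lt_of_le (heigpos i0) (le_ciInf hi0)
  have hminmax : lammin ≤ lammax := by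
    refine le_trans (ciInf_le (Set.Finite.bddBelow (Set.finite_range _)) (⟨0, hn⟩ : Fin n)) ?_
    exact le_ciSup (Set.Finite.bddAbove (Set.finite_range _)) _
  have hlmax_pos : (0:ℝ) < lammax := lt_of_lt_of_le hlmin_pos hminmax
  have hquadlo : ∀ x : Fin n → ℝ,
      lammin * (∑ j, x j ^ 2) ≤ ∑ s, d s * (Φ.mulVec x) s ^ 2 := by
    intro x
    have h := (quad_bounds _ hHerm x).1
    rwa [quad_eq, sq_diag_eq] at h
  have hquadhi : ∀ x : Fin n → ℝ,
      (∑ s, d s * (Φ.mulVec x) s ^ 2) ≤ lammax * ∑ j, x j ^ 2 := by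
    intro x
    have h := (quad_bounds _ hHerm x).2
    rwa [quad_eq, sq_diag_eq] at h
  -- the D-norm-squared error process and the euclidean one
  set ts := θs P d γ Φ R with hts
  set F : ℕ → Ω → ℝ :=
    fun i ω => ∑ s, d s * (Φ.mulVec (θ i ω) s - Φ.mulVec ts s) ^ 2 with hF
  set gE : ℕ → Ω → ℝ := fun i ω => ∑ j, (θ i ω j - ts j) ^ 2 with hgE
  set err : ℕ → Ω → ℝ :=
    fun i ω => ∑ j, (θ (i + 1) ω j - G P d γ Φ R (θ i ω) j) ^ 2 with herr
  -- square-integrability of coordinates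
  have hL2c : ∀ i, i ≤ k → ∀ s : Fin N, MemLp (fun ω => Φ.mulVec (θ i ω) s) 2 Pr := by
    intro i hi s
    have hre : (fun ω => Φ.mulVec (θ i ω) s) = fun ω => ∑ j, Φ s j * θ i ω j := by
      funext ω; simp [Matrix.mulVec, dotProduct]
    rw [hre]
    exact memLp_finset_sum _ fun j _ => (hL2 i hi j).const_mul _
  have hL2G : ∀ i, i ≤ k → ∀ j, MemLp (fun ω => G P d γ Φ R (θ i ω) j) 2 Pr := by
    intro i hi j
    have hre : (fun ω => G P d γ Φ R (θ i ω) j)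
        = fun ω => ((Φᵀ * Matrix.diagonal d * Φ)⁻¹.mulVec
              ((Φᵀ * Matrix.diagonal d).mulVec R)) j
            + ((γ • ((Φᵀ * Matrix.diagonal d * Φ)⁻¹ * (Φᵀ * Matrix.diagonal d) * P * Φ)).mulVec
                (θ i ω)) j := by
      funext ω
      rw [G_affine]
      rfl
    rw [hre]
    exact (memLp_const (μ := Pr) (p := 2) (((Φᵀ * Matrix.diagonal d * Φ)⁻¹.mulVec
      ((Φᵀ * Matrix.diagonal d).mulVec R)) j)).add (memL2_mulVec (μ := Pr)
      (γ • ((Φᵀ * Matrix.diagonal d * Φ)⁻¹ * (Φᵀ * Matrix.diagonal d) * P * Φ)) (θ i)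
      (fun t => hL2 i hi t) j)
  -- integrability
  have hint_F : ∀ i, i ≤ k → Integrable (F i) Pr := by
    intro i hi
    refine integrable_finset_sum _ fun s _ => ?_
    exact (((hL2c i hi s).sub (memLp_const _)).integrable_sq).const_mul _
  have hint_g : ∀ i, i ≤ k → Integrable (gE i) Pr := by
    intro i hi
    refine integrable_finset_sum _ fun j _ => ?_
    exact ((hL2 i hi j).sub (memLp_const _)).integrable_sq
  have hint_err : ∀ i, i < k → Integrable (err i) Pr := by
    intro i hi
    refine integrable_finset_sum _ fun j _ => ?_
    exact ((hL2 (i + 1) hi j).sub (hL2G i hi.le j)).integrable_sq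
  -- pointwise recursion bound
  have hfix' : G P d γ Φ R ts = ts := by rw [hts]; exact hfix
  have hβ : (0:ℝ) < (1 - γ ^ 2) / (2 * γ ^ 2) := div_pos h1mγ (by positivity)
  have hco1 : 1 + 1 / ((1 - γ ^ 2) / (2 * γ ^ 2)) = (1 + γ ^ 2) / (1 - γ ^ 2) := by
    field_simp
    ring
  have hco2 : (1 + (1 - γ ^ 2) / (2 * γ ^ 2)) * γ ^ 2 = (1 + γ ^ 2) / 2 := by
    field_simp
    ring
  have hpt : ∀ i, i < k → ∀ ω,
      F (i + 1) ω ≤ ((1 + γ ^ 2) / (1 - γ ^ 2) * lammax) * err i ω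
        + ((1 + γ ^ 2) / 2) * F i ω := by
    intro i hi ω
    have he2 : Φ.mulVec (fun j => θ (i + 1) ω j - G P d γ Φ R (θ i ω) j)
        = fun s => Φ.mulVec (θ (i + 1) ω) s - Φ.mulVec (G P d γ Φ R (θ i ω)) s := by
      have h : (fun j => θ (i + 1) ω j - G P d γ Φ R (θ i ω) j)
          = θ (i + 1) ω - G P d γ Φ R (θ i ω) := rfl
      rw [h, Matrix.mulVec_sub]
      funext s; simp
    have hA : (∑ s, d s * (Φ.mulVec (fun j => θ (i + 1) ω j - G P d γ Φ R (θ i ω) j)) s ^ 2)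
        ≤ lammax * err i ω := hquadhi _
    have hB : (∑ s, d s * (Φ.mulVec (G P d γ Φ R (θ i ω)) s - Φ.mulVec ts s) ^ 2)
        ≤ γ ^ 2 * F i ω := by
      have hc := contraction P d γ Φ R hd0 hPnonneg hProw hstat hMdet (θ i ω) ts
      rw [hfix'] at hc
      exact hc
    have hAe : (∑ s, d s * (Φ.mulVec (fun j => θ (i + 1) ω j - G P d γ Φ R (θ i ω) j)) s ^ 2)
        = ∑ s, d s * (Φ.mulVec (θ (i + 1) ω) s - Φ.mulVec (G P d γ Φ R (θ i ω)) s) ^ 2 :=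
      Finset.sum_congr rfl fun s _ => by rw [congrFun he2 s]
    have hw := sqd_weighted d hd0 ((1 - γ ^ 2) / (2 * γ ^ 2)) hβ
      (fun s => Φ.mulVec (θ (i + 1) ω) s - Φ.mulVec (G P d γ Φ R (θ i ω)) s)
      (fun s => Φ.mulVec (G P d γ Φ R (θ i ω)) s - Φ.mulVec ts s)
    have hsum : F (i + 1) ω
        = ∑ s, d s * ((Φ.mulVec (θ (i + 1) ω) s - Φ.mulVec (G P d γ Φ R (θ i ω)) s)
            + (Φ.mulVec (G P d γ Φ R (θ i ω)) s - Φ.mulVec ts s)) ^ 2 :=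
      Finset.sum_congr rfl fun s _ => by ring
    rw [hAe] at hA
    have h1 : (0:ℝ) ≤ 1 + 1 / ((1 - γ ^ 2) / (2 * γ ^ 2)) := by positivity
    have h2 : (0:ℝ) ≤ 1 + (1 - γ ^ 2) / (2 * γ ^ 2) := by positivity
    calc F (i + 1) ω
        = ∑ s, d s * ((Φ.mulVec (θ (i + 1) ω) s - Φ.mulVec (G P d γ Φ R (θ i ω)) s)
            + (Φ.mulVec (G P d γ Φ R (θ i ω)) s - Φ.mulVec ts s)) ^ 2 := hsum
      _ ≤ (1 + 1 / ((1 - γ ^ 2) / (2 * γ ^ 2)))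
            * ∑ s, d s * (Φ.mulVec (θ (i + 1) ω) s - Φ.mulVec (G P d γ Φ R (θ i ω)) s) ^ 2
          + (1 + (1 - γ ^ 2) / (2 * γ ^ 2))
            * ∑ s, d s * (Φ.mulVec (G P d γ Φ R (θ i ω)) s - Φ.mulVec ts s) ^ 2 := hw
      _ ≤ (1 + 1 / ((1 - γ ^ 2) / (2 * γ ^ 2))) * (lammax * err i ω)
          + (1 + (1 - γ ^ 2) / (2 * γ ^ 2)) * (γ ^ 2 * F i ω) :=
          add_le_add (mul_le_mul_of_nonneg_left hA h1) (mul_le_mul_of_nonneg_left hB h2)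
      _ = ((1 + γ ^ 2) / (1 - γ ^ 2) * lammax) * err i ω
          + ((1 + γ ^ 2) / 2) * F i ω := by
          rw [← hco1, ← hco2]; ring
  -- integrals
  have ha0 : ∀ i, (0:ℝ) ≤ ∫ ω, F i ω ∂Pr := by
    intro i
    refine integral_nonneg fun ω => ?_
    exact sqd_nonneg d hd0 (fun s => Φ.mulVec (θ i ω) s - Φ.mulVec ts s)
  have hc1nn : (0:ℝ) ≤ (1 + γ ^ 2) / (1 - γ ^ 2) * lammax := by positivity
  have hstep : ∀ i, i < k →
      (∫ ω, F (i + 1) ω ∂Pr) ≤ ((1 + γ ^ 2) / 2) * (∫ ω, F i ω ∂Pr)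
        + ((1 + γ ^ 2) / (1 - γ ^ 2) * lammax) * ε := by
    intro i hi
    have hmono : (∫ ω, F (i + 1) ω ∂Pr)
        ≤ ∫ ω, (((1 + γ ^ 2) / (1 - γ ^ 2) * lammax) * err i ω
            + ((1 + γ ^ 2) / 2) * F i ω) ∂Pr := by
      refine integral_mono (hint_F (i + 1) hi) ?_ (fun ω => hpt i hi ω)
      exact ((hint_err i hi).const_mul _).add ((hint_F i hi.le).const_mul _)
    have hsplit : (∫ ω, (((1 + γ ^ 2) / (1 - γ ^ 2) * lammax) * err i ω
            + ((1 + γ ^ 2) / 2) * F i ω) ∂Pr)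
        = ((1 + γ ^ 2) / (1 - γ ^ 2) * lammax) * (∫ ω, err i ω ∂Pr)
          + ((1 + γ ^ 2) / 2) * (∫ ω, F i ω ∂Pr) := by
      rw [integral_add ((hint_err i hi).const_mul _) ((hint_F i hi.le).const_mul _),
        integral_const_mul, integral_const_mul]
    have herrε : (∫ ω, err i ω ∂Pr) ≤ ε := hrec i hi
    have := mul_le_mul_of_nonneg_left herrε hc1nn
    linarith
  -- induction
  have hqc : ((1 + γ ^ 2) / 2) * (2 * (1 + γ ^ 2) * lammax / ((1 - γ ^ 2) ^ 2))
      + (1 + γ ^ 2) / (1 - γ ^ 2) * lammax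
      = 2 * (1 + γ ^ 2) * lammax / ((1 - γ ^ 2) ^ 2) := by
    field_simp
    ring
  have hq0 : (0:ℝ) ≤ (1 + γ ^ 2) / 2 := by positivity
  have hq1 : (1 + γ ^ 2) / 2 ≤ 1 := by linarith
  have hC0 : (0:ℝ) ≤ 2 * (1 + γ ^ 2) * lammax / ((1 - γ ^ 2) ^ 2) := by positivity
  have hind : ∀ j, j ≤ k →
      (∫ ω, F j ω ∂Pr) ≤ (∫ ω, F 0 ω ∂Pr)
        + (2 * (1 + γ ^ 2) * lammax / ((1 - γ ^ 2) ^ 2)) * ε := by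
    intro j
    induction j with
    | zero =>
      intro _
      have : (0:ℝ) ≤ (2 * (1 + γ ^ 2) * lammax / ((1 - γ ^ 2) ^ 2)) * ε :=
        mul_nonneg hC0 hε
      linarith
    | succ m ih =>
      intro hm
      have hmk : m < k := Nat.lt_of_succ_le hm
      have h1 := hstep m hmk
      have h2 := ih hmk.le
      have h3 : ((1 + γ ^ 2) / 2) * (∫ ω, F m ω ∂Pr)
          ≤ ((1 + γ ^ 2) / 2) * ((∫ ω, F 0 ω ∂Pr)
            + (2 * (1 + γ ^ 2) * lammax / ((1 - γ ^ 2) ^ 2)) * ε) :=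
        mul_le_mul_of_nonneg_left h2 hq0
      have h5 : ((1 + γ ^ 2) / 2) * (∫ ω, F 0 ω ∂Pr) ≤ (∫ ω, F 0 ω ∂Pr) :=
        mul_le_of_le_one_left (ha0 0) hq1
      have h4 : ((1 + γ ^ 2) / 2) * ((∫ ω, F 0 ω ∂Pr)
            + (2 * (1 + γ ^ 2) * lammax / ((1 - γ ^ 2) ^ 2)) * ε)
          = ((1 + γ ^ 2) / 2) * (∫ ω, F 0 ω ∂Pr)
            + ((1 + γ ^ 2) / 2) * ((2 * (1 + γ ^ 2) * lammax / ((1 - γ ^ 2) ^ 2)) * ε) := by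
        ring
      have h6 : ((1 + γ ^ 2) / 2) * ((2 * (1 + γ ^ 2) * lammax / ((1 - γ ^ 2) ^ 2)) * ε)
          + ((1 + γ ^ 2) / (1 - γ ^ 2) * lammax) * ε
          = (2 * (1 + γ ^ 2) * lammax / ((1 - γ ^ 2) ^ 2)) * ε := by
        calc ((1 + γ ^ 2) / 2) * ((2 * (1 + γ ^ 2) * lammax / ((1 - γ ^ 2) ^ 2)) * ε)
            + ((1 + γ ^ 2) / (1 - γ ^ 2) * lammax) * ε
            = (((1 + γ ^ 2) / 2) * (2 * (1 + γ ^ 2) * lammax / ((1 - γ ^ 2) ^ 2))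
              + (1 + γ ^ 2) / (1 - γ ^ 2) * lammax) * ε := by ring
          _ = _ := by rw [hqc]
      linarith only [h1, h3, h4, h5, h6]
  -- conclusion
  intro i hik
  have hlow : lammin * (∫ ω, gE i ω ∂Pr) ≤ ∫ ω, F i ω ∂Pr := by
    have hptlo : ∀ ω, lammin * gE i ω ≤ F i ω := by
      intro ω
      have h := hquadlo (fun j => θ i ω j - ts j)
      have hsub : Φ.mulVec (fun j => θ i ω j - ts j)
          = fun s => Φ.mulVec (θ i ω) s - Φ.mulVec ts s := by
        have hh : (fun j => θ i ω j - ts j) = θ i ω - ts := rfl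
        rw [hh, Matrix.mulVec_sub]
        funext s; simp
      have hre : (∑ s, d s * (Φ.mulVec (fun j => θ i ω j - ts j)) s ^ 2) = F i ω :=
        Finset.sum_congr rfl fun s _ => by rw [congrFun hsub s]
      rw [hre] at h
      exact h
    calc lammin * (∫ ω, gE i ω ∂Pr) = ∫ ω, lammin * gE i ω ∂Pr := by
          rw [integral_const_mul]
      _ ≤ ∫ ω, F i ω ∂Pr :=
          integral_mono ((hint_g i hik).const_mul _) (hint_F i hik) hptlo
  have hai := hind i hik
  have hgoal : (∫ ω, gE i ω ∂Pr)
      ≤ ((∫ ω, F 0 ω ∂Pr) + (2 * (1 + γ ^ 2) * lammax / ((1 - γ ^ 2) ^ 2)) * ε) / lammin := by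
    rw [le_div_iff₀ hlmin_pos]
    calc (∫ ω, gE i ω ∂Pr) * lammin = lammin * (∫ ω, gE i ω ∂Pr) := mul_comm _ _
      _ ≤ ∫ ω, F i ω ∂Pr := hlow
      _ ≤ _ := hai
  have hω2 : ω₂ = (∫ ω, F 0 ω ∂Pr) / lammin := by
    have hInt : (∫ ω, sqD (Φ.mulVec (θ 0 ω) - Φ.mulVec θstar) ∂Pr) = ∫ ω, F 0 ω ∂Pr := by
      refine integral_congr_ae (Filter.Eventually.of_forall fun ω => ?_)
      show (Φ.mulVec (θ 0 ω) - Φ.mulVec θstar) ⬝ᵥ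
        (Matrix.diagonal d).mulVec (Φ.mulVec (θ 0 ω) - Φ.mulVec θstar) = F 0 ω
      rw [sq_diag_eq]
      exact Finset.sum_congr rfl fun s _ => by rw [Pi.sub_apply, hθeq]
    show (∫ ω, sqD (Φ.mulVec (θ 0 ω) - Φ.mulVec θstar) ∂Pr) / lammin = _
    rw [hInt]
  have hω1 : ω₁ = (2 * (1 + γ ^ 2) * lammax / ((1 - γ ^ 2) ^ 2)) / lammin := by
    show 2 * (1 + γ ^ 2) * lammax / ((1 - γ ^ 2) ^ 2 * lammin) = _
    rw [div_div]
  have hfinal : ω₁ * ε + ω₂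
      = ((∫ ω, F 0 ω ∂Pr) + (2 * (1 + γ ^ 2) * lammax / ((1 - γ ^ 2) ^ 2)) * ε) / lammin := by
    rw [hω1, hω2]
    field_simp
    ring
  have hgE_goal : (∫ ω, (∑ j, (θ i ω j - θstar j) ^ 2) ∂Pr) = ∫ ω, gE i ω ∂Pr := by
    refine integral_congr_ae (Filter.Eventually.of_forall fun ω => ?_)
    exact Finset.sum_congr rfl fun j _ => by rw [hθeq]
  rw [hgE_goal, hfinal]
  exact hgoal
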